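/- Assume every N_α (α ∈ A) is Hausdorff. Let J be an index set with functions c_j : (0,1) → M (j ∈ J), fix α ∈ A, and suppose there is an open set U ⊆ N_α whose closure in N_α is compact and such that O_J(N_α, ι_α) ⊆ U. Then O_J(N_upp, ι_upp) = j_α(O_J(N_α, ι_α)). -/
import Mathlib


open Topology Filter

/-- The identification relation on the disjoint union `Σ α, N α`:
`(α,p) ∼ (β,q)` iff (`α ≤ β` and `ψ_{αβ}(p) = q`) or (`β ≤ α` and `ψ_{βα}(q) = p`). -/
def simRel {A : Type*} [LinearOrder A] {N : A → Type*}
    (ψ : ∀ α β : A, α ≤ β → N α → N β) :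
    (Σ α, N α) → (Σ α, N α) → Prop :=
  fun x y =>
    (∃ h : x.1 ≤ y.1, ψ x.1 y.1 h x.2 = y.2) ∨
    (∃ h : y.1 ≤ x.1, ψ y.1 x.1 h y.2 = x.2)

/-- The "thickening" `O_J(Z, f)` associated to a family of curves `c_j : (0,1) → M` and a map
`f : M → Z`: all points `f (c j t)` with `t ∈ (0,1)`, together with all limits of
`t ↦ f (c j t)` as `t → 1⁻`. -/
def OSet {M Z : Type*} [TopologicalSpace Z] {J : Type*} (c : J → ℝ → M) (f : M → Z) :
    Set Z :=
  {z | (∃ j : J, ∃ t ∈ Set.Ioo (0:ℝ) 1, f (c j t) = z) ∨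
       (∃ j : J, Filter.Tendsto (fun t => f (c j t)) (nhdsWithin 1 (Set.Ioo (0:ℝ) 1)) (nhds z))}

section Aux

variable {A : Type*} [LinearOrder A] {N : A → Type*}

lemma simRel_equivalence (ψ : ∀ α β : A, α ≤ β → N α → N β)
    (hψinj : ∀ (α β : A) (h : α ≤ β), Function.Injective (ψ α β h))
    (hψid : ∀ (α : A) (h : α ≤ α), ψ α α h = id)
    (hψcomp : ∀ (α β γ : A) (h₁ : α ≤ β) (h₂ : β ≤ γ),
      (ψ β γ h₂) ∘ (ψ α β h₁) = ψ α γ (h₁.trans h₂)) :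
    Equivalence (simRel ψ) := by
  constructor
  · intro x
    exact Or.inl ⟨le_refl _, by rw [hψid]; rfl⟩
  · rintro x y (h | h)
    · exact Or.inr h
    · exact Or.inl h
  · rintro ⟨a, p⟩ ⟨b, q⟩ ⟨c, r⟩ (⟨h1, e1⟩ | ⟨h1, e1⟩) (⟨h2, e2⟩ | ⟨h2, e2⟩)
    · exact Or.inl ⟨h1.trans h2,
        ((congrFun (hψcomp a b c h1 h2) p).symm.trans
          ((congrArg (ψ b c h2) e1).trans e2) : _)⟩
    · rcases le_total a c with h | h
      · exact Or.inl ⟨h, hψinj c b h2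
          ((congrFun (hψcomp a c b h h2) p).trans (e1.trans e2.symm))⟩
      · exact Or.inr ⟨h, hψinj a b h1
          ((congrFun (hψcomp c a b h h1) r).trans (e2.trans e1.symm))⟩
    · rcases le_total a c with h | h
      · refine Or.inl ⟨h, ?_⟩
        rw [← e1]
        exact (congrFun (hψcomp b a c h1 h) q).trans e2
      · refine Or.inr ⟨h, ?_⟩
        rw [← e2]
        exact (congrFun (hψcomp b c a h2 h) q).trans e1
    · exact Or.inr ⟨h2.trans h1,
        (congrFun (hψcomp c b a h2 h1) r).symm.trans ((congrArg (ψ b a h1) e2).trans e1)⟩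

lemma simRel_mk_eq_iff (ψ : ∀ α β : A, α ≤ β → N α → N β)
    (hψinj : ∀ (α β : A) (h : α ≤ β), Function.Injective (ψ α β h))
    (hψid : ∀ (α : A) (h : α ≤ α), ψ α α h = id)
    (hψcomp : ∀ (α β γ : A) (h₁ : α ≤ β) (h₂ : β ≤ γ),
      (ψ β γ h₂) ∘ (ψ α β h₁) = ψ α γ (h₁.trans h₂))
    {x y : Σ α, N α} :
    Quot.mk (simRel ψ) x = Quot.mk (simRel ψ) y ↔ simRel ψ x y := by
  rw [Quot.eq]
  exact (simRel_equivalence ψ hψinj hψid hψcomp).eqvGen_iff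

lemma simRel_j_isOpenEmbedding [∀ α, TopologicalSpace (N α)]
    (ψ : ∀ α β : A, α ≤ β → N α → N β)
    (hψ : ∀ (α β : A) (h : α ≤ β), IsOpenEmbedding (ψ α β h))
    (hψid : ∀ (α : A) (h : α ≤ α), ψ α α h = id)
    (hψcomp : ∀ (α β γ : A) (h₁ : α ≤ β) (h₂ : β ≤ γ),
      (ψ β γ h₂) ∘ (ψ α β h₁) = ψ α γ (h₁.trans h₂))
    (γ : A) :
    IsOpenEmbedding (fun p : N γ => Quot.mk (simRel ψ) ⟨γ, p⟩) := by
  have hψinj : ∀ (α β : A) (h : α ≤ β), Function.Injective (ψ α β h) :=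
    fun α β h => (hψ α β h).injective
  refine IsOpenEmbedding.of_continuous_injective_isOpenMap ?_ ?_ ?_
  · exact continuous_quot_mk.comp continuous_sigmaMk
  · intro p q hpq
    rcases (simRel_mk_eq_iff ψ hψinj hψid hψcomp).mp hpq with ⟨h, e⟩ | ⟨h, e⟩
    · rw [hψid γ h] at e; exact e
    · rw [hψid γ h] at e; exact e.symm
  · intro V hV
    rw [isOpen_coinduced, isOpen_sigma_iff]
    intro β
    have key : Sigma.mk β ⁻¹' (Quot.mk (simRel ψ) ⁻¹'
        ((fun p : N γ => Quot.mk (simRel ψ) ⟨γ, p⟩) '' V)) =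
        {q : N β | ∃ h : γ ≤ β, q ∈ ψ γ β h '' V} ∪
        {q : N β | ∃ h : β ≤ γ, ψ β γ h q ∈ V} := by
      ext q
      simp only [Set.mem_preimage, Set.mem_image, Set.mem_union, Set.mem_setOf_eq]
      constructor
      · rintro ⟨p, hpV, hpq⟩
        rcases (simRel_mk_eq_iff ψ hψinj hψid hψcomp).mp hpq with ⟨h, e⟩ | ⟨h, e⟩
        · exact Or.inl ⟨h, p, hpV, e⟩
        · exact Or.inr ⟨h, by rwa [e]⟩
      · rintro (⟨h, p, hpV, e⟩ | ⟨h, e⟩)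
        · exact ⟨p, hpV, (simRel_mk_eq_iff ψ hψinj hψid hψcomp).mpr (Or.inl ⟨h, e⟩)⟩
        · exact ⟨ψ β γ h q, e, (simRel_mk_eq_iff ψ hψinj hψid hψcomp).mpr (Or.inr ⟨h, rfl⟩)⟩
    rw [key]
    apply IsOpen.union
    · rcases le_or_gt γ β with h | h
      · have : {q : N β | ∃ h : γ ≤ β, q ∈ ψ γ β h '' V} = ψ γ β h '' V := by
          ext q
          exact ⟨fun ⟨h', hq⟩ => hq, fun hq => ⟨h, hq⟩⟩
        rw [this]
        exact (hψ γ β h).isOpenMap V hV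
      · have : {q : N β | ∃ h : γ ≤ β, q ∈ ψ γ β h '' V} = ∅ := by
          ext q
          simp [h.not_ge]
        rw [this]
        exact isOpen_empty
    · rcases le_or_gt β γ with h | h
      · have : {q : N β | ∃ h : β ≤ γ, ψ β γ h q ∈ V} = ψ β γ h ⁻¹' V := by
          ext q
          exact ⟨fun ⟨h', hq⟩ => hq, fun hq => ⟨h, hq⟩⟩
        rw [this]
        exact hV.preimage (hψ β γ h).continuous
      · have : {q : N β | ∃ h : β ≤ γ, ψ β γ h q ∈ V} = ∅ := by
          ext q
          simp [h.not_ge]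
        rw [this]
        exact isOpen_empty

end Aux

/-- If all `N_α` are Hausdorff and `O_J(N_α, ι_α)` is contained in an open set `U ⊆ N_α`
with compact closure, then `O_J(N_upp, ι_upp) = j_α(O_J(N_α, ι_α))`. -/
theorem OSet_eq_image_of_relatively_compact
    {M : Type*} [TopologicalSpace M]
    {A : Type*} [LinearOrder A] [Nonempty A]
    {N : A → Type*} [∀ α, TopologicalSpace (N α)]
    (ι : ∀ α, M → N α) (hι : ∀ α, IsOpenEmbedding (ι α))
    (ψ : ∀ α β : A, α ≤ β → N α → N β)
    (hψ : ∀ (α β : A) (h : α ≤ β), IsOpenEmbedding (ψ α β h))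
    (hψι : ∀ (α β : A) (h : α ≤ β), (ψ α β h) ∘ (ι α) = ι β)
    (hψid : ∀ (α : A) (h : α ≤ α), ψ α α h = id)
    (hψcomp : ∀ (α β γ : A) (h₁ : α ≤ β) (h₂ : β ≤ γ),
      (ψ β γ h₂) ∘ (ψ α β h₁) = ψ α γ (h₁.trans h₂))
    (hT2 : ∀ α : A, T2Space (N α))
    (α₀ : A) {J : Type*} (c : J → ℝ → M) (α : A)
    (U : Set (N α)) (hU : IsOpen U) (hUc : IsCompact (closure U))
    (hsub : OSet c (ι α) ⊆ U) :
    OSet c (fun m => Quot.mk (simRel ψ) ⟨α₀, ι α₀ m⟩) =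
      (fun p : N α => Quot.mk (simRel ψ) ⟨α, p⟩) '' (OSet c (ι α)) := by
  have jOE : ∀ γ : A, IsOpenEmbedding (fun p : N γ => Quot.mk (simRel ψ) ⟨γ, p⟩) :=
    simRel_j_isOpenEmbedding ψ hψ hψid hψcomp
  have hcompat : ∀ (β γ : A) (h : β ≤ γ) (p : N β),
      Quot.mk (simRel ψ) ⟨γ, ψ β γ h p⟩ = Quot.mk (simRel ψ) ⟨β, p⟩ :=
    fun β γ h p => Quot.sound (Or.inr ⟨h, rfl⟩)
  have hι₀ : ∀ m : M, Quot.mk (simRel ψ) ⟨α₀, ι α₀ m⟩ = Quot.mk (simRel ψ) ⟨α, ι α m⟩ := by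
    intro m
    rcases le_total α₀ α with h | h
    · have e : ψ α₀ α h (ι α₀ m) = ι α m := congrFun (hψι α₀ α h) m
      rw [← e]
      exact (hcompat α₀ α h (ι α₀ m)).symm
    · have e : ψ α α₀ h (ι α m) = ι α₀ m := congrFun (hψι α α₀ h) m
      rw [← e]
      exact hcompat α α₀ h (ι α m)
  ext z
  simp only [OSet, Set.mem_setOf_eq, Set.mem_image]
  constructor
  · rintro (⟨jj, t, ht, he⟩ | ⟨jj, htend⟩)
    · exact ⟨ι α (c jj t), Or.inl ⟨jj, t, ht, rfl⟩, (hι₀ (c jj t)).symm.trans he⟩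
    · -- hard direction: the limit exists already in `N α`
      have htend' : Tendsto (fun t => Quot.mk (simRel ψ) ⟨α, ι α (c jj t)⟩)
          (𝓝[Set.Ioo (0:ℝ) 1] 1) (𝓝 z) := by
        simpa only [hι₀] using htend
      haveI hLne : (𝓝[Set.Ioo (0:ℝ) 1] (1:ℝ)).NeBot := by
        rw [← mem_closure_iff_nhdsWithin_neBot, closure_Ioo (by norm_num : (0:ℝ) ≠ 1)]
        exact ⟨by norm_num, le_refl 1⟩
      have hmemU : ∀ t ∈ Set.Ioo (0:ℝ) 1, ι α (c jj t) ∈ U :=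
        fun t ht => hsub (Or.inl ⟨jj, t, ht, rfl⟩)
      have hzcl : z ∈ closure
          ((fun p : N α => Quot.mk (simRel ψ) ⟨α, p⟩) '' closure U) := by
        apply mem_closure_of_tendsto htend'
        filter_upwards [self_mem_nhdsWithin] with t ht
        exact ⟨ι α (c jj t), subset_closure (hmemU t ht), rfl⟩
      obtain ⟨⟨β, q⟩, hq⟩ := Quot.exists_rep z
      have hαγ : α ≤ max α β := le_max_left _ _
      have hβγ : β ≤ max α β := le_max_right _ _
      have hzγ : z = Quot.mk (simRel ψ) ⟨max α β, ψ β (max α β) hβγ q⟩ := by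
        rw [hcompat β (max α β) hβγ q, hq]
      have himg : (fun p : N α => Quot.mk (simRel ψ) ⟨α, p⟩) '' closure U =
          (fun p : N (max α β) => Quot.mk (simRel ψ) ⟨max α β, p⟩) ''
            (ψ α (max α β) hαγ '' closure U) := by
        rw [← Set.image_comp]
        apply Set.image_congr
        intro p _
        exact (hcompat α (max α β) hαγ p).symm
      have hS : IsCompact (ψ α (max α β) hαγ '' closure U) :=
        hUc.image (hψ α (max α β) hαγ).continuous
      have hScl : IsClosed (ψ α (max α β) hαγ '' closure U) := by
        haveI := hT2 (max α β)
        exact hS.isClosed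
      have h1 : ψ β (max α β) hβγ q ∈ closure (ψ α (max α β) hαγ '' closure U) := by
        rw [(jOE (max α β)).isInducing.closure_eq_preimage_closure_image]
        simp only [Set.mem_preimage]
        rw [← hzγ, ← himg]
        exact hzcl
      rw [hScl.closure_eq] at h1
      obtain ⟨w, hw, hwq⟩ := h1
      have hzw : z = Quot.mk (simRel ψ) ⟨α, w⟩ := by
        rw [hzγ, ← hwq, hcompat α (max α β) hαγ w]
      have htendw : Tendsto (fun t => ι α (c jj t)) (𝓝[Set.Ioo (0:ℝ) 1] 1) (𝓝 w) := by
        rw [(jOE α).isInducing.tendsto_nhds_iff]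
        have := htend'
        rw [hzw] at this
        exact this
      exact ⟨w, Or.inr ⟨jj, htendw⟩, hzw.symm⟩
  · rintro ⟨p, hp, rfl⟩
    rcases hp with ⟨jj, t, ht, he⟩ | ⟨jj, htend⟩
    · exact Or.inl ⟨jj, t, ht,
        (hι₀ (c jj t)).trans (congrArg (fun p => Quot.mk (simRel ψ) ⟨α, p⟩) he)⟩
    · refine Or.inr ⟨jj, ?_⟩
      have : Tendsto (fun t => Quot.mk (simRel ψ) ⟨α, ι α (c jj t)⟩)
          (𝓝[Set.Ioo (0:ℝ) 1] 1) (𝓝 (Quot.mk (simRel ψ) ⟨α, p⟩)) :=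
        ((jOE α).continuous.tendsto p).comp htend
      simpa only [hι₀] using this
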